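/- Let G be a Borel probability measure on ℝ, let p : ℕ → ℝ → ℝ≥0 with each p(k, ·) measurable and ∑_{k=0}^∞ p(k, u) = 1 for G-almost every u, and let q ∈ (0,1] satisfy ∫ (∑_{k=0}^∞ p(k, u)·q^k) dG(u) = q. Set h(u) := ∑_{k=0}^∞ p(k, u)·q^k, let G̃ := G.withDensity (u ↦ h(u)/q), and define the conditioned splitting probabilities p̃(k, u) := p(k, u)·q^k / h(u) when h(u) > 0 and p̃(k, u) := 0 otherwise. Then for every k ∈ ℕ and every Borel set A ⊆ ℝ, ∫_A p̃(k, u) dG̃(u) = (1/q)·∫_A p(k, u)·q^k dG(u). Hence the joint conditioned distribution of offspring number and life span factorizes as p̃_k(u)·G̃(du), and the conditioned process is again a Sevastyanov process with life span distribution G̃ and splitting probabilities p̃_k(u). -/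

import Mathlib

open MeasureTheory
open scoped NNReal ENNReal Classical

/-- For a Sevastyanov splitting process with life span distribution `G`,
splitting probabilities `p k u`, and extinction probability `q ∈ (0,1]`
satisfying `∫ h dG = q` where `h(u) = ∑ₖ p(k,u) qᵏ`, the conditioned process
with life span distribution `G̃ = (h/q) dG` and splitting probabilities
`p̃(k,u) = p(k,u) qᵏ / h(u)` (when `h(u) > 0`, else `0`) satisfies
`∫_A p̃(k,u) dG̃(u) = (1/q) ∫_A p(k,u) qᵏ dG(u)` for every `k` and Borel `A`:
the conditioned joint law of offspring number and life span is
`p̃ₖ(u) G̃(du)`. -/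
theorem conditioned_sevastyanov_joint_law
    (G : Measure ℝ) [IsProbabilityMeasure G]
    (p : ℕ → ℝ → ℝ≥0) (hmeas : ∀ k, Measurable (p k))
    (hsum : ∀ᵐ u ∂G, ∑' k, (p k u : ℝ≥0∞) = 1)
    (q : ℝ) (hq0 : 0 < q) (hq1 : q ≤ 1)
    (h : ℝ → ℝ≥0∞) (hh : ∀ u, h u = ∑' k, (p k u : ℝ≥0∞) * (ENNReal.ofReal q) ^ k)
    (hfix : ∫⁻ u, h u ∂G = ENNReal.ofReal q)
    (pt : ℕ → ℝ → ℝ≥0∞)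
    (hpt : ∀ k u, pt k u =
      if 0 < h u then (p k u : ℝ≥0∞) * (ENNReal.ofReal q) ^ k / h u else 0) :
    ∀ k : ℕ, ∀ A : Set ℝ, MeasurableSet A →
      ∫⁻ u in A, pt k u ∂(G.withDensity fun u => h u / ENNReal.ofReal q)
        = (∫⁻ u in A, (p k u : ℝ≥0∞) * (ENNReal.ofReal q) ^ k ∂G)
            / ENNReal.ofReal q := by
  intro k A hA
  set qE : ℝ≥0∞ := ENNReal.ofReal q with hqE
  have hqE0 : qE ≠ 0 := by
    simp [hqE, ENNReal.ofReal_eq_zero, not_le, hq0]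
  have hqE1 : qE ≤ 1 := by
    rw [hqE, ← ENNReal.ofReal_one]
    exact ENNReal.ofReal_le_ofReal hq1
  have hqEtop : qE ≠ ⊤ := ENNReal.ofReal_ne_top
  have hhmeas : Measurable h := by
    have : Measurable fun u => ∑' k, (p k u : ℝ≥0∞) * qE ^ k :=
      Measurable.ennreal_tsum fun k => ((hmeas k).coe_nnreal_ennreal).mul_const _
    simpa [funext hh] using this
  have hptmeas : Measurable (pt k) := by
    have : Measurable fun u =>
        if 0 < h u then (p k u : ℝ≥0∞) * qE ^ k / h u else 0 := by
      apply Measurable.ite (by simpa using measurableSet_lt measurable_const hhmeas)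
      · exact (((hmeas k).coe_nnreal_ennreal).mul_const _).div hhmeas
      · exact measurable_const
    simpa [funext (hpt k)] using this
  have hdmeas : Measurable fun u => h u / qE := hhmeas.div_const _
  rw [MeasureTheory.setLIntegral_withDensity_eq_setLIntegral_mul G hdmeas hptmeas hA]
  have hcongr : ∀ᵐ u ∂(G.restrict A),
      (fun u => h u / qE) u * pt k u = (p k u : ℝ≥0∞) * qE ^ k / qE := by
    filter_upwards [ae_restrict_of_ae hsum] with u hu
    rcases eq_or_lt_of_le (zero_le : 0 ≤ h u) with h0 | h0
    · have hterm : (p k u : ℝ≥0∞) * qE ^ k = 0 := by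
        have hle : (p k u : ℝ≥0∞) * qE ^ k ≤ h u := by
          rw [hh u]; exact ENNReal.le_tsum k
        rw [← h0] at hle
        exact le_antisymm hle zero_le
      simp [hpt, ← h0, hterm]
    · have hne0 : h u ≠ 0 := h0.ne'
      have hle1 : h u ≤ 1 := by
        rw [hh u]
        calc ∑' j, (p j u : ℝ≥0∞) * qE ^ j ≤ ∑' j, (p j u : ℝ≥0∞) * 1 := by
              refine ENNReal.tsum_le_tsum fun j => ?_
              exact mul_le_mul_right (pow_le_one' hqE1 j) _
          _ = 1 := by simpa using hu
      have hnetop : h u ≠ ⊤ := ne_top_of_le_ne_top ENNReal.one_ne_top hle1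
      rw [hpt, if_pos h0, div_eq_mul_inv, div_eq_mul_inv, div_eq_mul_inv]
      have : h u * qE⁻¹ * ((p k u : ℝ≥0∞) * qE ^ k * (h u)⁻¹)
          = (p k u : ℝ≥0∞) * qE ^ k * qE⁻¹ * (h u * (h u)⁻¹) := by ring
      rw [this, ENNReal.mul_inv_cancel hne0 hnetop, mul_one]
  simp only [Pi.mul_apply]
  rw [lintegral_congr_ae hcongr]
  simp only [div_eq_mul_inv]
  exact lintegral_mul_const _ (((hmeas k).coe_nnreal_ennreal).mul_const _)
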